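/- Let H(s, p) = C(s,p)K(s,p)⁻¹B(s,p) be a parametrized transfer function where K(s,p) ∈ ℂⁿˣⁿ, B(s,p) ∈ ℂⁿˣᵐ, C(s,p) ∈ ℂᵖˣⁿ depend on s ∈ ℂ and a parameter vector p ∈ ℝᵛ. Let V, W ∈ ℂⁿˣʳ and H_r(s,p) = (C(s,p)V)(WᵀK(s,p)V)⁻¹(WᵀB(s,p)). Fix σ ∈ ℂ, π ∈ ℝᵛ with K(σ,π) and WᵀK(σ,π)V invertible, and nonzero r ∈ ℂᵐ, ℓ ∈ ℂᵖ. If K(σ,π)⁻¹B(σ,π)r ∈ Ran(V) and (ℓᵀC(σ,π)K(σ,π)⁻¹)ᵀ ∈ Ran(W), then the gradients with respect to p match: ∇_p [ℓᵀH(σ,p)r]|_{p=π} = ∇_p [ℓᵀH_r(σ,p)r]|_{p=π}. -/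

import Mathlib

open Matrix
open scoped Matrix

set_option maxHeartbeats 2000000

section helpers

variable {t0 : ℝ}

lemma diffAt_det {k : ℕ} {M : ℝ → Matrix (Fin k) (Fin k) ℂ}
    (h : ∀ a b, DifferentiableAt ℝ (fun t => M t a b) t0) :
    DifferentiableAt ℝ (fun t => (M t).det) t0 := by
  simp only [Matrix.det_apply]
  refine DifferentiableAt.fun_sum fun s _ => ?_
  simp only [Units.smul_def, zsmul_eq_mul]
  exact (differentiableAt_const _).mul (DifferentiableAt.fun_finsetProd fun j _ => h _ _)

lemma diffAt_inv_entry {k : ℕ} {M : ℝ → Matrix (Fin k) (Fin k) ℂ}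
    (h : ∀ a b, DifferentiableAt ℝ (fun t => M t a b) t0)
    (hdet : (M t0).det ≠ 0) (a b : Fin k) :
    DifferentiableAt ℝ (fun t => (M t)⁻¹ a b) t0 := by
  have hadj : DifferentiableAt ℝ (fun t => (M t).adjugate a b) t0 := by
    simp only [Matrix.adjugate_apply]
    refine diffAt_det (M := fun t => (M t).updateRow b (Pi.single a 1)) fun a' b' => ?_
    by_cases hab : a' = b
    · simp [Matrix.updateRow_apply, hab]
    · simpa [Matrix.updateRow_apply, hab] using h a' b'
  have : (fun t => (M t)⁻¹ a b) = fun t => ((M t).det)⁻¹ * (M t).adjugate a b := by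
    funext t
    rw [Matrix.inv_def, Matrix.smul_apply, Ring.inverse_eq_inv', smul_eq_mul]
  rw [this]
  exact ((diffAt_det h).inv hdet).mul hadj

lemma diffAt_mul_entry {a b c : ℕ} {M : ℝ → Matrix (Fin a) (Fin b) ℂ}
    {N : ℝ → Matrix (Fin b) (Fin c) ℂ}
    (hM : ∀ i j, DifferentiableAt ℝ (fun t => M t i j) t0)
    (hN : ∀ i j, DifferentiableAt ℝ (fun t => N t i j) t0) :
    ∀ i j, DifferentiableAt ℝ (fun t => (M t * N t) i j) t0 := by
  intro i j
  simp only [Matrix.mul_apply]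
  exact DifferentiableAt.fun_sum fun k _ => (hM i k).mul (hN k j)

lemma diffAt_dot {k : ℕ} {u w : ℝ → Fin k → ℂ}
    (hu : ∀ a, DifferentiableAt ℝ (fun t => u t a) t0)
    (hw : ∀ a, DifferentiableAt ℝ (fun t => w t a) t0) :
    DifferentiableAt ℝ (fun t => u t ⬝ᵥ w t) t0 := by
  simp only [dotProduct]
  exact DifferentiableAt.fun_sum fun a _ => (hu a).mul (hw a)

lemma diffAt_mulVec {a b : ℕ} {M : ℝ → Matrix (Fin a) (Fin b) ℂ} {x : ℝ → Fin b → ℂ}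
    (hM : ∀ i j, DifferentiableAt ℝ (fun t => M t i j) t0)
    (hx : ∀ j, DifferentiableAt ℝ (fun t => x t j) t0) :
    ∀ i, DifferentiableAt ℝ (fun t => (M t *ᵥ x t) i) t0 := by
  intro i
  simp only [Matrix.mulVec, dotProduct]
  exact DifferentiableAt.fun_sum fun k _ => (hM i k).mul (hx k)

lemma diffAt_vecMul {a b : ℕ} {x : ℝ → Fin a → ℂ} {M : ℝ → Matrix (Fin a) (Fin b) ℂ}
    (hx : ∀ k, DifferentiableAt ℝ (fun t => x t k) t0)
    (hM : ∀ k j, DifferentiableAt ℝ (fun t => M t k j) t0) :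
    ∀ j, DifferentiableAt ℝ (fun t => (x t ᵥ* M t) j) t0 := by
  intro j
  simp only [Matrix.vecMul, dotProduct]
  exact DifferentiableAt.fun_sum fun k _ => (hx k).mul (hM k j)

end helpers

/-- Parameter sensitivity matching for interpolatory parametric model reduction:
for `H(s,p) = C(s,p) K(s,p)⁻¹ B(s,p)` and the projected reduced model
`H_r(s,p) = C(s,p)V (WᵀK(s,p)V)⁻¹ WᵀB(s,p)`, if the tangential conditions
`K(σ,π)⁻¹B(σ,π)r ∈ Ran(V)` and `(ℓᵀC(σ,π)K(σ,π)⁻¹)ᵀ ∈ Ran(W)` hold, then all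
first-order parameter sensitivities of `ℓᵀH(σ,·)r` and `ℓᵀH_r(σ,·)r` agree at `π`. -/
theorem parametric_sensitivity_matching
    {n m p r v : ℕ}
    (K : ℂ → (Fin v → ℝ) → Matrix (Fin n) (Fin n) ℂ)
    (B : ℂ → (Fin v → ℝ) → Matrix (Fin n) (Fin m) ℂ)
    (C : ℂ → (Fin v → ℝ) → Matrix (Fin p) (Fin n) ℂ)
    (V W : Matrix (Fin n) (Fin r) ℂ)
    (σ : ℂ) (π : Fin v → ℝ)
    (hKdiff : ∀ (i : Fin v) (a b : Fin n),
      DifferentiableAt ℝ (fun t : ℝ => K σ (Function.update π i t) a b) (π i))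
    (hBdiff : ∀ (i : Fin v) (a : Fin n) (b : Fin m),
      DifferentiableAt ℝ (fun t : ℝ => B σ (Function.update π i t) a b) (π i))
    (hCdiff : ∀ (i : Fin v) (a : Fin p) (b : Fin n),
      DifferentiableAt ℝ (fun t : ℝ => C σ (Function.update π i t) a b) (π i))
    (hK : IsUnit (K σ π).det)
    (hKr : IsUnit (Wᵀ * K σ π * V).det)
    (rdir : Fin m → ℂ) (hrdir : rdir ≠ 0)
    (ldir : Fin p → ℂ) (hldir : ldir ≠ 0)
    (hranV : ∃ c : Fin r → ℂ, V *ᵥ c = (K σ π)⁻¹ *ᵥ (B σ π *ᵥ rdir))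
    (hranW : ∃ c : Fin r → ℂ, W *ᵥ c = (C σ π * (K σ π)⁻¹)ᵀ *ᵥ ldir) :
    ∀ i : Fin v,
      deriv (fun t : ℝ =>
          ldir ⬝ᵥ ((C σ (Function.update π i t) * (K σ (Function.update π i t))⁻¹ *
              B σ (Function.update π i t)) *ᵥ rdir)) (π i)
        = deriv (fun t : ℝ =>
            ldir ⬝ᵥ (((C σ (Function.update π i t) * V) *
                (Wᵀ * K σ (Function.update π i t) * V)⁻¹ *
                (Wᵀ * B σ (Function.update π i t))) *ᵥ rdir)) (π i) := by
  intro i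
  have hup : Function.update π i (π i) = π := Function.update_eq_self i π
  -- entrywise differentiability
  have hKd : ∀ a b, DifferentiableAt ℝ (fun t : ℝ => K σ (Function.update π i t) a b) (π i) :=
    hKdiff i
  have hBd : ∀ a b, DifferentiableAt ℝ (fun t : ℝ => B σ (Function.update π i t) a b) (π i) :=
    hBdiff i
  have hCd : ∀ a b, DifferentiableAt ℝ (fun t : ℝ => C σ (Function.update π i t) a b) (π i) :=
    hCdiff i
  have hVc : ∀ (a : Fin n) (b : Fin r), DifferentiableAt ℝ (fun _ : ℝ => V a b) (π i) :=
    fun a b => differentiableAt_const _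
  have hWc : ∀ (a : Fin r) (b : Fin n), DifferentiableAt ℝ (fun _ : ℝ => Wᵀ a b) (π i) :=
    fun a b => differentiableAt_const _
  have hKrd : ∀ a b, DifferentiableAt ℝ
      (fun t : ℝ => (Wᵀ * K σ (Function.update π i t) * V) a b) (π i) :=
    diffAt_mul_entry (diffAt_mul_entry hWc hKd) hVc
  -- nonvanishing determinants at π i
  have hdetK : (K σ (Function.update π i (π i))).det ≠ 0 := by
    rw [hup]; exact hK.ne_zero
  have hdetKr : (Wᵀ * K σ (Function.update π i (π i)) * V).det ≠ 0 := by
    rw [hup]; exact hKr.ne_zero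
  -- differentiability of inverse entries
  have hKi : ∀ a b, DifferentiableAt ℝ
      (fun t : ℝ => (K σ (Function.update π i t))⁻¹ a b) (π i) :=
    diffAt_inv_entry hKd hdetK
  have hKri : ∀ a b, DifferentiableAt ℝ
      (fun t : ℝ => (Wᵀ * K σ (Function.update π i t) * V)⁻¹ a b) (π i) :=
    diffAt_inv_entry hKrd hdetKr
  -- the error vectors
  set er : ℝ → Fin n → ℂ := fun t =>
    ((K σ (Function.update π i t))⁻¹ * B σ (Function.update π i t)) *ᵥ rdir
      - (V * ((Wᵀ * K σ (Function.update π i t) * V)⁻¹ *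
          (Wᵀ * B σ (Function.update π i t)))) *ᵥ rdir with her
  set el : ℝ → Fin n → ℂ := fun t =>
    ldir ᵥ* (C σ (Function.update π i t) * (K σ (Function.update π i t))⁻¹)
      - ldir ᵥ* (C σ (Function.update π i t) * V *
          (Wᵀ * K σ (Function.update π i t) * V)⁻¹ * Wᵀ) with hel
  -- entrywise differentiability of the error vectors
  have herd : ∀ a, DifferentiableAt ℝ (fun t => er t a) (π i) := by
    intro a
    simp only [her, Pi.sub_apply]
    exact (diffAt_mulVec (x := fun _ : ℝ => rdir) (diffAt_mul_entry hKi hBd)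
        (fun _ => differentiableAt_const _) a).sub
      (diffAt_mulVec (x := fun _ : ℝ => rdir)
        (diffAt_mul_entry hVc (diffAt_mul_entry hKri (diffAt_mul_entry hWc hBd)))
        (fun _ => differentiableAt_const _) a)
  have held : ∀ a, DifferentiableAt ℝ (fun t => el t a) (π i) := by
    intro a
    simp only [hel, Pi.sub_apply]
    exact (diffAt_vecMul (x := fun _ : ℝ => ldir) (fun _ => differentiableAt_const _)
        (diffAt_mul_entry hCd hKi) a).sub
      (diffAt_vecMul (x := fun _ : ℝ => ldir) (fun _ => differentiableAt_const _)
        (diffAt_mul_entry (diffAt_mul_entry (diffAt_mul_entry hCd hVc) hKri) hWc) a)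
  -- the error vectors vanish at π i (tangential interpolation conditions)
  have hc1 : K σ π * (K σ π)⁻¹ = 1 := Matrix.mul_nonsing_inv _ hK
  have hc2 : (K σ π)⁻¹ * K σ π = 1 := Matrix.nonsing_inv_mul _ hK
  have hc3 : (Wᵀ * K σ π * V) * (Wᵀ * K σ π * V)⁻¹ = 1 := Matrix.mul_nonsing_inv _ hKr
  have hc4 : (Wᵀ * K σ π * V)⁻¹ * (Wᵀ * K σ π * V) = 1 := Matrix.nonsing_inv_mul _ hKr
  have her0 : er (π i) = 0 := by
    obtain ⟨c, hc⟩ := hranV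
    have hBr : B σ π *ᵥ rdir = K σ π *ᵥ (V *ᵥ c) := by
      rw [hc, Matrix.mulVec_mulVec, hc1, Matrix.one_mulVec]
    have e1 : ((K σ π)⁻¹ * B σ π) *ᵥ rdir = V *ᵥ c := by
      rw [← Matrix.mulVec_mulVec, ← hc]
    have s1 : Wᵀ *ᵥ (B σ π *ᵥ rdir) = (Wᵀ * K σ π * V) *ᵥ c := by
      rw [hBr, Matrix.mulVec_mulVec, Matrix.mulVec_mulVec]
    have s2 : (Wᵀ * K σ π * V)⁻¹ *ᵥ (Wᵀ *ᵥ (B σ π *ᵥ rdir)) = c := by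
      rw [s1, Matrix.mulVec_mulVec, hc4, Matrix.one_mulVec]
    have e2 : (V * ((Wᵀ * K σ π * V)⁻¹ * (Wᵀ * B σ π))) *ᵥ rdir = V *ᵥ c := by
      rw [← Matrix.mulVec_mulVec, ← Matrix.mulVec_mulVec, ← Matrix.mulVec_mulVec, s2]
    simp only [her, hup]
    rw [e1, e2, sub_self]
  have hel0 : el (π i) = 0 := by
    obtain ⟨d, hd⟩ := hranW
    have hld : ldir ᵥ* (C σ π * (K σ π)⁻¹) = d ᵥ* Wᵀ := by
      rw [Matrix.vecMul_transpose, hd, Matrix.mulVec_transpose]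
    have hlc : ldir ᵥ* C σ π = d ᵥ* (Wᵀ * K σ π) := by
      have h := congrArg (fun x => x ᵥ* K σ π) hld
      simp only [Matrix.vecMul_vecMul] at h
      rwa [Matrix.mul_assoc, hc2, Matrix.mul_one] at h
    have u1 : ldir ᵥ* (C σ π * V) = d ᵥ* (Wᵀ * K σ π * V) := by
      rw [← Matrix.vecMul_vecMul, hlc, Matrix.vecMul_vecMul]
    have u2 : ldir ᵥ* (C σ π * V * (Wᵀ * K σ π * V)⁻¹) = d := by
      rw [← Matrix.vecMul_vecMul, u1, Matrix.vecMul_vecMul, hc3, Matrix.vecMul_one]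
    have e2 : ldir ᵥ* (C σ π * V * (Wᵀ * K σ π * V)⁻¹ * Wᵀ) = d ᵥ* Wᵀ := by
      rw [← Matrix.vecMul_vecMul, u2]
    simp only [hel, hup]
    rw [hld, e2, sub_self]
  -- D := elᵀ K er  has derivative 0 at π i
  have hD : HasDerivAt
      (fun t => el t ⬝ᵥ (K σ (Function.update π i t) *ᵥ er t)) 0 (π i) := by
    have : HasDerivAt
        (fun t => el t ⬝ᵥ (K σ (Function.update π i t) *ᵥ er t)) (∑ a : Fin n, 0) (π i) := by
      simp only [dotProduct]
      refine HasDerivAt.fun_sum fun a _ => ?_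
      have h1 : DifferentiableAt ℝ (fun t => el t a) (π i) := held a
      have h2 : DifferentiableAt ℝ
          (fun t => (K σ (Function.update π i t) *ᵥ er t) a) (π i) :=
        diffAt_mulVec hKd herd a
      have := h1.hasDerivAt.fun_mul h2.hasDerivAt
      have hz1 : el (π i) a = 0 := by rw [hel0]; rfl
      simpa [hz1, her0] using this
    simpa using this
  -- the algebraic identity f - g = elᵀ K er near π i
  have hid : ∀ t : ℝ, (K σ (Function.update π i t)).det ≠ 0 →
      (Wᵀ * K σ (Function.update π i t) * V).det ≠ 0 →
      (ldir ⬝ᵥ ((C σ (Function.update π i t) * (K σ (Function.update π i t))⁻¹ *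
          B σ (Function.update π i t)) *ᵥ rdir))
        - (ldir ⬝ᵥ (((C σ (Function.update π i t) * V) *
            (Wᵀ * K σ (Function.update π i t) * V)⁻¹ *
            (Wᵀ * B σ (Function.update π i t))) *ᵥ rdir))
      = el t ⬝ᵥ (K σ (Function.update π i t) *ᵥ er t) := by
    intro t h1 h2
    set A := K σ (Function.update π i t) with hA
    set Bc := B σ (Function.update π i t) with hBc
    set Cc := C σ (Function.update π i t) with hCc
    set Ai := A⁻¹ with hAi
    set Ari := (Wᵀ * A * V)⁻¹ with hAri
    have u1 : IsUnit A.det := isUnit_iff_ne_zero.mpr h1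
    have u2 : IsUnit (Wᵀ * A * V).det := isUnit_iff_ne_zero.mpr h2
    have d1 : A * Ai = 1 := Matrix.mul_nonsing_inv _ u1
    have d2 : Ai * A = 1 := Matrix.nonsing_inv_mul _ u1
    have d4 : Ari * (Wᵀ * A * V) = 1 := Matrix.nonsing_inv_mul _ u2
    have r1 : ∀ (q : ℕ) (X : Matrix (Fin n) (Fin q) ℂ), A * (Ai * X) = X := fun q X => by
      rw [← Matrix.mul_assoc, d1, Matrix.one_mul]
    have r2 : ∀ (q : ℕ) (X : Matrix (Fin n) (Fin q) ℂ), Ai * (A * X) = X := fun q X => by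
      rw [← Matrix.mul_assoc, d2, Matrix.one_mul]
    have r4 : ∀ (q : ℕ) (X : Matrix (Fin r) (Fin q) ℂ),
        Ari * (Wᵀ * (A * (V * X))) = X := fun q X => by
      rw [show Wᵀ * (A * (V * X)) = (Wᵀ * A * V) * X by simp only [Matrix.mul_assoc],
        ← Matrix.mul_assoc, d4, Matrix.one_mul]
    have hmat : (Cc * Ai - Cc * V * Ari * Wᵀ) * A *
        ((Ai * Bc) - V * (Ari * (Wᵀ * Bc)))
        = Cc * Ai * Bc - Cc * V * Ari * (Wᵀ * Bc) := by
      simp only [Matrix.sub_mul, Matrix.mul_sub, Matrix.mul_assoc, r1, r2, r4]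
      abel
    calc ldir ⬝ᵥ ((Cc * Ai * Bc) *ᵥ rdir)
          - ldir ⬝ᵥ (((Cc * V) * Ari * (Wᵀ * Bc)) *ᵥ rdir)
        = ldir ⬝ᵥ (((Cc * Ai * Bc) - Cc * V * Ari * (Wᵀ * Bc)) *ᵥ rdir) := by
          rw [Matrix.sub_mulVec, dotProduct_sub]
      _ = ldir ⬝ᵥ (((Cc * Ai - Cc * V * Ari * Wᵀ) * A *
            ((Ai * Bc) - V * (Ari * (Wᵀ * Bc)))) *ᵥ rdir) := by rw [hmat]
      _ = el t ⬝ᵥ (A *ᵥ er t) := by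
          simp only [her, hel, ← hA, ← hBc, ← hCc, ← hAi, ← hAri]
          rw [← Matrix.mulVec_mulVec, ← Matrix.mulVec_mulVec, Matrix.dotProduct_mulVec,
            Matrix.vecMul_sub, Matrix.sub_mulVec]
  -- eventually, f = g + D
  have hevK : ∀ᶠ t in nhds (π i), (K σ (Function.update π i t)).det ≠ 0 :=
    (diffAt_det hKd).continuousAt.eventually_ne hdetK
  have hevKr : ∀ᶠ t in nhds (π i), (Wᵀ * K σ (Function.update π i t) * V).det ≠ 0 :=
    (diffAt_det hKrd).continuousAt.eventually_ne hdetKr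
  have hev : (fun t : ℝ =>
      ldir ⬝ᵥ ((C σ (Function.update π i t) * (K σ (Function.update π i t))⁻¹ *
        B σ (Function.update π i t)) *ᵥ rdir))
      =ᶠ[nhds (π i)] (fun t : ℝ =>
        (ldir ⬝ᵥ (((C σ (Function.update π i t) * V) *
          (Wᵀ * K σ (Function.update π i t) * V)⁻¹ *
          (Wᵀ * B σ (Function.update π i t))) *ᵥ rdir))
        + el t ⬝ᵥ (K σ (Function.update π i t) *ᵥ er t)) := by
    filter_upwards [hevK, hevKr] with t h1 h2
    have := hid t h1 h2
    exact sub_eq_iff_eq_add'.mp this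
  -- differentiability of g
  have hgdiff : DifferentiableAt ℝ (fun t : ℝ =>
      ldir ⬝ᵥ (((C σ (Function.update π i t) * V) *
        (Wᵀ * K σ (Function.update π i t) * V)⁻¹ *
        (Wᵀ * B σ (Function.update π i t))) *ᵥ rdir)) (π i) :=
    diffAt_dot (fun _ => differentiableAt_const _)
      (diffAt_mulVec (diffAt_mul_entry (diffAt_mul_entry (diffAt_mul_entry hCd hVc) hKri)
        (diffAt_mul_entry hWc hBd)) (fun _ => differentiableAt_const _))
  rw [hev.deriv_eq, deriv_fun_add hgdiff hD.differentiableAt, hD.deriv]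
  simp
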